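/- Every strongly IC abelian group is an IC-group, every IC-group is an IFI-group, and a nonzero torsion abelian group is a strongly IC-group if and only if it is an elementary abelian p-group for some prime p. -/

import Mathlib

/-- A characteristic subgroup: invariant under all automorphisms. -/
def IsCharSub {G : Type*} [AddCommGroup G] (H : AddSubgroup G) : Prop :=
  ∀ φ : G ≃+ G, ∀ x ∈ H, φ x ∈ H

/-- A fully invariant subgroup: invariant under all endomorphisms. -/
def IsFullyInvSub {G : Type*} [AddCommGroup G] (H : AddSubgroup G) : Prop :=
  ∀ f : G →+ G, ∀ x ∈ H, f x ∈ H

/-- An IC-group: all non-trivial proper characteristic subgroups are isomorphic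
(vacuously true if there are only trivial ones). -/
def IsICGroup (G : Type*) [AddCommGroup G] : Prop :=
  ∀ H K : AddSubgroup G, IsCharSub H → IsCharSub K →
    H ≠ ⊥ → H ≠ ⊤ → K ≠ ⊥ → K ≠ ⊤ → Nonempty (H ≃+ K)

/-- An IFI-group: all non-trivial proper fully invariant subgroups are isomorphic. -/
def IsIFIGroup (G : Type*) [AddCommGroup G] : Prop :=
  ∀ H K : AddSubgroup G, IsFullyInvSub H → IsFullyInvSub K →
    H ≠ ⊥ → H ≠ ⊤ → K ≠ ⊥ → K ≠ ⊤ → Nonempty (H ≃+ K)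

/-- A strongly IC-group: all nonzero characteristic subgroups are isomorphic. -/
def IsStronglyICGroup (G : Type*) [AddCommGroup G] : Prop :=
  ∀ H K : AddSubgroup G, IsCharSub H → IsCharSub K →
    H ≠ ⊥ → K ≠ ⊥ → Nonempty (H ≃+ K)

/-- Any two nonzero vectors are related by a linear automorphism. -/
theorem exists_linearEquiv_map_eq {K V : Type*} [Field K] [AddCommGroup V] [Module K V]
    {x y : V} (hx : x ≠ 0) (hy : y ≠ 0) : ∃ e : V ≃ₗ[K] V, e x = y := by
  have lix : LinearIndepOn K id ({x} : Set V) :=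
    LinearIndepOn.singleton hx
  have liy : LinearIndepOn K id ({y} : Set V) :=
    LinearIndepOn.singleton hy
  let bx := Module.Basis.extend lix
  let bY := Module.Basis.extend liy
  classical
  obtain ⟨e0⟩ := Cardinal.eq.mp (mk_eq_mk_of_basis' bx bY)
  have hxm : x ∈ lix.extend (Set.subset_univ _) := lix.subset_extend _ rfl
  have hym : y ∈ liy.extend (Set.subset_univ _) := liy.subset_extend _ rfl
  let i0 : ↥(lix.extend (Set.subset_univ _)) := ⟨x, hxm⟩
  let j0 : ↥(liy.extend (Set.subset_univ _)) := ⟨y, hym⟩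
  let e' := e0.trans (Equiv.swap (e0 i0) j0)
  refine ⟨bx.equiv bY e', ?_⟩
  have h1 : bx i0 = x := Module.Basis.extend_apply_self lix i0
  have h2 : bY j0 = y := Module.Basis.extend_apply_self liy j0
  have h3 : e' i0 = j0 := by simp [e']
  calc (bx.equiv bY e') x = (bx.equiv bY e') (bx i0) := by rw [h1]
    _ = bY (e' i0) := bx.equiv_apply i0 bY e'
    _ = y := by rw [h3, h2]

/-- The p-torsion subgroup. -/
def torsionSub (G : Type*) [AddCommGroup G] (p : ℕ) : AddSubgroup G where
  carrier := {x | p • x = 0}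
  zero_mem' := by simp
  add_mem' := by
    intro a b ha hb
    simp only [Set.mem_setOf_eq, smul_add] at *
    rw [ha, hb, add_zero]
  neg_mem' := by
    intro a ha
    simp only [Set.mem_setOf_eq, smul_neg] at *
    rw [ha, neg_zero]

theorem torsionSub_char {G : Type*} [AddCommGroup G] (p : ℕ) : IsCharSub (torsionSub G p) := by
  intro φ x hx
  have h : p • φ x = φ (p • x) := (map_nsmul φ.toAddMonoidHom p x).symm
  show p • φ x = 0
  rw [h, hx, map_zero]

/-- In an elementary abelian p-group, every nonzero characteristic subgroup is everything. -/
theorem char_eq_top_of_elementary {G : Type*} [AddCommGroup G] {p : ℕ} (hp : p.Prime)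
    (hpg : ∀ g : G, p • g = 0) (H : AddSubgroup G) (hH : IsCharSub H) (hne : H ≠ ⊥) :
    H = ⊤ := by
  haveI : Fact p.Prime := ⟨hp⟩
  letI : Module (ZMod p) G := AddCommGroup.zmodModule hpg
  obtain ⟨⟨x, hxH⟩, hx⟩ := AddSubgroup.ne_bot_iff_exists_ne_zero.mp hne
  have hx0 : x ≠ 0 := fun h => hx (Subtype.ext h)
  rw [AddSubgroup.eq_top_iff']
  intro y
  by_cases hy0 : y = 0
  · rw [hy0]; exact H.zero_mem
  · obtain ⟨e, he⟩ := exists_linearEquiv_map_eq (K := ZMod p) hx0 hy0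
    have hm := hH e.toAddEquiv x hxH
    rwa [show e.toAddEquiv x = y from he] at hm

/-- Every strongly IC abelian group is an IC-group, every IC-group is an
IFI-group, and a nonzero torsion abelian group is strongly IC iff it is an elementary
abelian `p`-group for some prime `p`. -/
theorem stmt19 :
    (∀ (G : Type u) [AddCommGroup G], IsStronglyICGroup G → IsICGroup G) ∧
    (∀ (G : Type u) [AddCommGroup G], IsICGroup G → IsIFIGroup G) ∧
    (∀ (G : Type u) [AddCommGroup G], Nontrivial G →
      (∀ g : G, ∃ n : ℕ, 0 < n ∧ n • g = 0) →
      (IsStronglyICGroup G ↔ ∃ p : ℕ, p.Prime ∧ ∀ g : G, p • g = 0)) := by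
  refine ⟨?_, ?_, ?_⟩
  · intro G _ hS H K hH hK hHb _ hKb _
    exact hS H K hH hK hHb hKb
  · intro G _ hIC H K hH hK hHb hHt hKb hKt
    exact hIC H K (fun φ => hH φ.toAddMonoidHom) (fun φ => hK φ.toAddMonoidHom)
      hHb hHt hKb hKt
  · intro G _ hnt htors
    constructor
    · intro hS
      -- find an element of prime order
      obtain ⟨g, hg0⟩ := exists_ne (0 : G)
      obtain ⟨n, hn, hng⟩ := htors g
      have hfin : IsOfFinAddOrder g := isOfFinAddOrder_iff_nsmul_eq_zero.mpr ⟨n, hn, hng⟩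
      have hord : 0 < addOrderOf g := hfin.addOrderOf_pos
      have hord1 : addOrderOf g ≠ 1 := fun h => hg0 (AddMonoid.addOrderOf_eq_one_iff.mp h)
      set p := (addOrderOf g).minFac with hpdef
      have hp : p.Prime := Nat.minFac_prime hord1
      have hpd : p ∣ addOrderOf g := Nat.minFac_dvd _
      set h := (addOrderOf g / p) • g with hhdef
      have hph : p • h = 0 := by
        rw [hhdef, smul_smul, Nat.mul_div_cancel' hpd, addOrderOf_nsmul_eq_zero]
      have hh0 : h ≠ 0 := by
        intro h0
        have hdvd : addOrderOf g ∣ addOrderOf g / p :=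
          addOrderOf_dvd_of_nsmul_eq_zero (by rw [← hhdef, h0])
        have hlt : addOrderOf g / p < addOrderOf g :=
          Nat.div_lt_self hord hp.one_lt
        have hpos : 0 < addOrderOf g / p :=
          Nat.div_pos (Nat.le_of_dvd hord hpd) hp.pos
        exact absurd (Nat.le_of_dvd hpos hdvd) (not_le.mpr hlt)
      -- the p-torsion subgroup is characteristic and nonzero
      have hTne : torsionSub G p ≠ ⊥ := by
        intro hb
        have : h ∈ torsionSub G p := hph
        rw [hb, AddSubgroup.mem_bot] at this
        exact hh0 this
      have hTopChar : IsCharSub (⊤ : AddSubgroup G) := fun φ x _ => trivial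
      have hTopNe : (⊤ : AddSubgroup G) ≠ ⊥ := by
        intro hb
        obtain ⟨a, b, hab⟩ := hnt
        have ha : a ∈ (⊥ : AddSubgroup G) := hb ▸ AddSubgroup.mem_top a
        have hbb : b ∈ (⊥ : AddSubgroup G) := hb ▸ AddSubgroup.mem_top b
        rw [AddSubgroup.mem_bot] at ha hbb
        exact hab (ha.trans hbb.symm)
      obtain ⟨e⟩ := hS ⊤ (torsionSub G p) hTopChar (torsionSub_char p) hTopNe hTne
      refine ⟨p, hp, fun x => ?_⟩
      have hmem : ((e ⟨x, AddSubgroup.mem_top x⟩ : torsionSub G p) : G) ∈ torsionSub G p :=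
        (e ⟨x, AddSubgroup.mem_top x⟩).2
      have : p • e ⟨x, AddSubgroup.mem_top x⟩ = 0 := by
        ext
        simp only [ZeroMemClass.coe_zero]; exact hmem
      rw [← map_nsmul] at this
      have h0 : (p • (⟨x, AddSubgroup.mem_top x⟩ : (⊤ : AddSubgroup G))) = 0 :=
        e.injective (by rw [this, map_zero])
      have := congrArg (Subtype.val) h0
      simpa using this
    · rintro ⟨p, hp, hpg⟩ H K hH hK hHb hKb
      rw [char_eq_top_of_elementary hp hpg H hH hHb,
        char_eq_top_of_elementary hp hpg K hK hKb]
      exact ⟨AddEquiv.refl _⟩
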